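/- Let α ∈ ℝ, Φ ∈ ℝ, τ > 0 and t ≥ τ. Let u : ℝ → ℝ be continuous and let y : ℝ → ℝ be differentiable with ẏ(σ) = Φ + α·u(σ) for all σ in the window [t − τ, t]. Then the algebraic real-time estimator recovers Φ exactly: Φ = −(6/τ³) · ∫₀^τ [ (τ − 2σ)·y(t − τ + σ) + α·σ·(τ − σ)·u(t − τ + σ) ] dσ. -/

import Mathlib

/-- Exactness of the first algebraic estimator of the model-free control
scheme: if `ẏ(σ) = Φ + α u(σ)` on the window `[t − τ, t]`, then
`Φ = −(6/τ³) ∫₀^τ [(τ − 2σ) y(t − τ + σ) + α σ (τ − σ) u(t − τ + σ)] dσ`. -/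
theorem mfc_first_estimator_exact
    (α Φ τ t : ℝ) (hτ : 0 < τ) (ht : τ ≤ t)
    (u y : ℝ → ℝ) (hu : Continuous u) (hy : Differentiable ℝ y)
    (hmodel : ∀ σ ∈ Set.Icc (t - τ) t, deriv y σ = Φ + α * u σ) :
    Φ = -(6 / τ ^ 3) *
        ∫ σ in (0 : ℝ)..τ,
          ((τ - 2 * σ) * y (t - τ + σ) + α * σ * (τ - σ) * u (t - τ + σ)) := by
  -- derivative of σ ↦ σ(τ-σ)y(t-τ+σ)
  have key : ∀ σ ∈ Set.uIcc (0:ℝ) τ,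
      HasDerivAt (fun s => s * (τ - s) * y (t - τ + s))
        ((τ - 2*σ) * y (t - τ + σ) + σ * (τ - σ) * (Φ + α * u (t - τ + σ))) σ := by
    intro σ hσ
    rw [Set.uIcc_of_le hτ.le] at hσ
    have hmem : t - τ + σ ∈ Set.Icc (t - τ) t :=
      ⟨by linarith [hσ.1], by linarith [hσ.2]⟩
    have h1 : HasDerivAt (fun s : ℝ => s * (τ - s)) (τ - 2*σ) σ := by
      have := (hasDerivAt_id σ).mul ((hasDerivAt_const σ τ).sub (hasDerivAt_id σ))
      refine this.congr_deriv ?_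
      simp only [Pi.sub_apply, id_eq]
      ring
    have h2 : HasDerivAt (fun s : ℝ => y (t - τ + s)) (deriv y (t - τ + σ)) σ := by
      have := ((hy (t - τ + σ)).hasDerivAt.comp σ
        ((hasDerivAt_const σ (t - τ)).add (hasDerivAt_id σ)))
      exact this.congr_deriv (by simp)
    have := h1.mul h2
    rw [hmodel _ hmem] at this
    exact this
  have hcont : Continuous (fun σ : ℝ =>
      (τ - 2*σ) * y (t - τ + σ) + σ * (τ - σ) * (Φ + α * u (t - τ + σ))) := by
    have := hy.continuous
    fun_prop
  have hzero : ∫ σ in (0:ℝ)..τ,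
      ((τ - 2*σ) * y (t - τ + σ) + σ * (τ - σ) * (Φ + α * u (t - τ + σ))) = 0 := by
    rw [intervalIntegral.integral_eq_sub_of_hasDerivAt key (hcont.intervalIntegrable 0 τ)]
    simp
  have key2 : ∀ σ ∈ Set.uIcc (0:ℝ) τ,
      HasDerivAt (fun s : ℝ => τ * s^2 / 2 - s^3 / 3) (σ * (τ - σ)) σ := by
    intro σ _
    have h1 := (((hasDerivAt_pow 2 σ).const_mul τ).div_const 2).sub
        (((hasDerivAt_pow 3 σ)).div_const 3)
    refine h1.congr_deriv ?_
    push_cast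
    ring
  have hpoly : ∫ σ in (0:ℝ)..τ, σ * (τ - σ) = τ^3 / 6 := by
    rw [intervalIntegral.integral_eq_sub_of_hasDerivAt key2
      ((by fun_prop : Continuous (fun σ : ℝ => σ * (τ - σ))).intervalIntegrable 0 τ)]
    ring
  have hsplit : ∫ σ in (0:ℝ)..τ,
      ((τ - 2 * σ) * y (t - τ + σ) + α * σ * (τ - σ) * u (t - τ + σ))
      = (∫ σ in (0:ℝ)..τ,
          ((τ - 2*σ) * y (t - τ + σ) + σ * (τ - σ) * (Φ + α * u (t - τ + σ))))
        - Φ * ∫ σ in (0:ℝ)..τ, σ * (τ - σ) := by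
    rw [← intervalIntegral.integral_const_mul, ← intervalIntegral.integral_sub
      (hcont.intervalIntegrable 0 τ) ((by fun_prop : Continuous
        (fun σ : ℝ => Φ * (σ * (τ - σ)))).intervalIntegrable 0 τ)]
    exact intervalIntegral.integral_congr fun σ _ => by ring
  rw [hsplit, hzero, hpoly]
  field_simp
  ring
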